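/- Let m be a measure of granularity of sets on U and let P, Q be equivalence relations on U. If P refines Q (P ⪯ Q), then Gμ_P ≤ Gμ_Q, where Gμ_R = μ_R·EG_m(U/R). -/

import Mathlib

/-- The equivalence class of `x` under the equivalence relation (setoid) `E`. -/
def ecls {U : Type*} (E : Setoid U) (x : U) : Set U := {y | E.r x y}

/-- Classical lower approximation of `X` with respect to `E`. -/
def lowerApprox {U : Type*} (E : Setoid U) (X : Set U) : Set U :=
  {x | ecls E x ⊆ X}

/-- Classical upper approximation of `X` with respect to `E`. -/
def upperApprox {U : Type*} (E : Setoid U) (X : Set U) : Set U :=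
  {x | (ecls E x ∩ X).Nonempty}

/-- `P` refines `Q`: every `P`-class is contained in the corresponding `Q`-class. -/
def Refines {U : Type*} (P Q : Setoid U) : Prop := ∀ x : U, ecls P x ⊆ ecls Q x

/-- α-probabilistic lower approximation of `X` with respect to `E`:
`{x | |[x]_E ∩ X| ≥ α·|[x]_E|}`. -/
noncomputable def aprLow {U : Type*} (E : Setoid U) (α : ℝ) (X : Set U) : Set U :=
  {x | α * ((ecls E x).ncard : ℝ) ≤ (((ecls E x) ∩ X).ncard : ℝ)}

/-- β-probabilistic upper approximation of `X` with respect to `E`: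
`{x | |[x]_E ∩ X| > β·|[x]_E|}`. -/
noncomputable def aprUp {U : Type*} (E : Setoid U) (β : ℝ) (X : Set U) : Set U :=
  {x | β * ((ecls E x).ncard : ℝ) < (((ecls E x) ∩ X).ncard : ℝ)}

/-- `η_R = (Σ_{Y ∈ U/D} |lower_R(apr_C^α(Y))|) / (|U|·M)` where `M = |U/D|`. -/
noncomputable def eta {U : Type*} [Fintype U] (C D : Setoid U) (α : ℝ) (R : Setoid U) : ℝ :=
  haveI : Fintype (Quotient D) := Fintype.ofFinite _
  (∑ q : Quotient D,
      ((lowerApprox R (aprLow C α {x | Quotient.mk D x = q})).ncard : ℝ)) /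
    ((Fintype.card U : ℝ) * (Fintype.card (Quotient D) : ℝ))

/-- `μ_R = (Σ_{Y ∈ U/D} |upper_R(Apr_C^β(Y))|) / (|U|·M)` where `M = |U/D|`. -/
noncomputable def mu {U : Type*} [Fintype U] (C D : Setoid U) (β : ℝ) (R : Setoid U) : ℝ :=
  haveI : Fintype (Quotient D) := Fintype.ofFinite _
  (∑ q : Quotient D,
      ((upperApprox R (aprUp C β {x | Quotient.mk D x = q})).ncard : ℝ)) /
    ((Fintype.card U : ℝ) * (Fintype.card (Quotient D) : ℝ))


/-- A measure of granularity of sets on `U`: nonnegative, strictly monotone with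
respect to strict inclusion, and invariant under cardinality. -/
def IsGranularityMeasure {U : Type*} [Fintype U] (m : Set U → ℝ) : Prop :=
  (∀ X : Set U, 0 ≤ m X) ∧
  (∀ X Y : Set U, X ⊂ Y → m X < m Y) ∧
  (∀ X Y : Set U, X.ncard = Y.ncard → m X = m Y)

/-- Expected granularity `EG_m(π) = Σ_{X ∈ π} m(X)·(|X|/|U|)`. -/
noncomputable def EG {U : Type*} [Fintype U] (m : Set U → ℝ) (π : Finset (Set U)) : ℝ :=
  ∑ X ∈ π, m X * ((X.ncard : ℝ) / (Fintype.card U : ℝ))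

/-- The partition `U/R` of `U` into the equivalence classes of `R`. -/
noncomputable def partitionOf {U : Type*} [Fintype U] (R : Setoid U) : Finset (Set U) :=
  haveI := Classical.decEq (Set U)
  Finset.univ.image (fun x : U => ecls R x)

/-- `Gη_R = EG_m(Π_1) − (1 − η_R)·EG_m(U/R)`, where `Π_1 = {U}`. -/
noncomputable def Geta {U : Type*} [Fintype U] (m : Set U → ℝ) (C D : Setoid U)
    (α : ℝ) (R : Setoid U) : ℝ :=
  EG m ({Set.univ} : Finset (Set U)) - (1 - eta C D α R) * EG m (partitionOf R)

/-- `Gμ_R = μ_R·EG_m(U/R)`. -/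
noncomputable def Gmu {U : Type*} [Fintype U] (m : Set U → ℝ) (C D : Setoid U)
    (β : ℝ) (R : Setoid U) : ℝ :=
  mu C D β R * EG m (partitionOf R)

lemma mem_ecls_self {U : Type*} (R : Setoid U) (x : U) : x ∈ ecls R x := R.refl x

lemma ecls_eq_of_rel {U : Type*} (R : Setoid U) {x y : U} (hr : R.r y x) :
    ecls R x = ecls R y := by
  ext z
  exact ⟨fun hz => R.trans hr hz, fun hz => R.trans (R.symm hr) hz⟩

lemma m_mono_le {U : Type*} [Fintype U] {m : Set U → ℝ} (hm : IsGranularityMeasure m)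
    {X Y : Set U} (hXY : X ⊆ Y) : m X ≤ m Y := by
  rcases eq_or_ne X Y with rfl | hne
  · exact le_rfl
  · exact le_of_lt (hm.2.1 X Y ⟨hXY, fun hYX => hne (le_antisymm hXY hYX)⟩)

lemma EG_partition {U : Type*} [Fintype U] (m : Set U → ℝ) (R : Setoid U) :
    EG m (partitionOf R) = (∑ x : U, m (ecls R x)) / (Fintype.card U : ℝ) := by
  classical
  have h1 : ∑ x : U, m (ecls R x)
      = ∑ X ∈ Finset.univ.image (fun x : U => ecls R x),
          ((Finset.univ.filter (fun x : U => ecls R x = X)).card) • m X :=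
    Finset.sum_comp m (fun x : U => ecls R x)
  unfold EG partitionOf
  rw [h1, Finset.sum_div]
  apply Finset.sum_congr rfl
  intro X hX
  rcases Finset.mem_image.mp hX with ⟨y, _, rfl⟩
  have hcard : (Finset.univ.filter (fun x : U => ecls R x = ecls R y)).card
      = (ecls R y).ncard := by
    have hfe : (Finset.univ.filter (fun x : U => ecls R x = ecls R y))
        = (Finset.univ.filter (fun x : U => x ∈ ecls R y)) := by
      apply Finset.filter_congr
      intro x _
      constructor
      · intro he; exact he ▸ mem_ecls_self R x
      · intro hx; exact ecls_eq_of_rel R hx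
    rw [hfe]
    rw [Set.ncard_eq_toFinset_card' (ecls R y)]
    congr 1
    ext x
    simp
  rw [hcard, nsmul_eq_mul]
  ring

lemma upperApprox_mono {U : Type*} {P Q : Setoid U} (h : Refines P Q) (X : Set U) :
    upperApprox P X ⊆ upperApprox Q X := by
  intro x hx
  rcases hx with ⟨z, hz1, hz2⟩
  exact ⟨z, h x hz1, hz2⟩

theorem Gmu_monotone_of_refines {U : Type*} [Fintype U] [Nonempty U]
    (m : Set U → ℝ) (hm : IsGranularityMeasure m)
    (C D : Setoid U) (β : ℝ) (hβ0 : 0 ≤ β) (hβ1 : β < 1)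
    (P Q : Setoid U) (h : Refines P Q) :
    Gmu m C D β P ≤ Gmu m C D β Q := by
  classical
  haveI : Fintype (Quotient D) := Fintype.ofFinite _
  have hU : (0:ℝ) < (Fintype.card U : ℝ) := by
    exact_mod_cast Fintype.card_pos
  -- mu monotone
  haveI : Nonempty (Quotient D) := ⟨Quotient.mk D (Classical.arbitrary U)⟩
  have hmu : mu C D β P ≤ mu C D β Q := by
    unfold mu
    apply div_le_div_of_nonneg_right _ (by positivity)
    apply Finset.sum_le_sum
    intro q _
    exact_mod_cast Set.ncard_le_ncard
      (upperApprox_mono h (aprUp C β {x | Quotient.mk D x = q}))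
      (Set.toFinite _)
  have hmuP : 0 ≤ mu C D β P := by
    unfold mu
    positivity
  have hmuQ : 0 ≤ mu C D β Q := le_trans hmuP hmu
  -- EG monotone
  have hEG : EG m (partitionOf P) ≤ EG m (partitionOf Q) := by
    rw [EG_partition, EG_partition]
    apply div_le_div_of_nonneg_right _ hU.le
    apply Finset.sum_le_sum
    intro x _
    exact m_mono_le hm (h x)
  have hEGP : 0 ≤ EG m (partitionOf P) := by
    rw [EG_partition]
    apply div_nonneg _ hU.le
    exact Finset.sum_nonneg fun x _ => hm.1 _
  have hEGQ : 0 ≤ EG m (partitionOf Q) := le_trans hEGP hEG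
  unfold Gmu
  exact mul_le_mul hmu hEG hEGP hmuQ
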